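/- For a finite reversible Markov chain, for every sequence of states v_1, …, v_k, the sum of hitting times around the cycle forward equals the sum around the cycle backward: H[v_k,v_1] + ∑_{i=1}^{k−1} H[v_i,v_{i+1}] = H[v_1,v_k] + ∑_{i=2}^{k} H[v_i,v_{i−1}]. -/

import Mathlib

open Finset

private lemma tele_aux {M : Type*} [AddCommGroup M] (k : ℕ) (F : Fin (k + 1) → M) :
    ∑ i : Fin k, (F i.succ - F i.castSucc) = F (Fin.last k) - F 0 := by
  induction k with
  | zero => simp
  | succ n ih =>
    rw [Fin.sum_univ_castSucc]
    have h := ih (fun i => F i.castSucc)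
    simp only [Fin.succ_castSucc]
    rw [h]
    simp [Fin.succ_last, Fin.castSucc_zero]

/-- Cycle-reversibility identity: for a finite irreducible reversible Markov chain, for every
sequence of states `v_0, …, v_k`, the sum of hitting times around the cycle forward equals the
sum around the cycle backward.  Here `H` is the expected-hitting-time function of the chain,
characterized by `H v v = 0` and `H u v = 1 + ∑ w, P u w * H w v` for `u ≠ v`, and
reversibility means `p u * P u v = p v * P v u` for the stationary distribution `p`. -/
theorem reversible_cycle_identity {V : Type*} [Fintype V]
    (P : V → V → ℝ)
    (hP0 : ∀ u v, 0 ≤ P u v) (hP1 : ∀ u, ∑ v, P u v = 1)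
    (hirr : ∀ u v, Relation.ReflTransGen (fun a b => 0 < P a b) u v)
    (p : V → ℝ) (hppos : ∀ v, 0 < p v) (hpsum : ∑ v, p v = 1)
    (hstat : ∀ v, ∑ u, p u * P u v = p v)
    (hrev : ∀ u v, p u * P u v = p v * P v u)
    (H : V → V → ℝ) (hH0 : ∀ v, H v v = 0)
    (hH : ∀ u v, u ≠ v → H u v = 1 + ∑ w, P u w * H w v)
    (k : ℕ) (vs : Fin (k + 1) → V) :
    H (vs (Fin.last k)) (vs 0) + ∑ i : Fin k, H (vs i.castSucc) (vs i.succ)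
      = H (vs 0) (vs (Fin.last k)) + ∑ i : Fin k, H (vs i.succ) (vs i.castSucc) := by
  classical
  set ψ : V → ℝ := fun v => ∑ u, p u * H u v with hψ
  -- Kac's formula: p v * (1 + return-sum) = 1
  have kac : ∀ v, p v * (1 + ∑ w, P v w * H w v) = 1 := by
    intro v
    have h1 : ∑ u ∈ univ.erase v, p u * H u v = ∑ u, p u * H u v :=
      Finset.sum_erase _ (by simp [hH0])
    have h2 : ∑ u ∈ univ.erase v, p u * H u v
        = ∑ u ∈ univ.erase v, (p u + p u * ∑ w, P u w * H w v) := by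
      refine Finset.sum_congr rfl fun u hu => ?_
      rw [hH u v (Finset.ne_of_mem_erase hu)]; ring
    have h3 : ∑ u ∈ univ.erase v, (p u + p u * ∑ w, P u w * H w v)
        = (∑ u ∈ univ.erase v, p u) + ∑ u ∈ univ.erase v, p u * ∑ w, P u w * H w v :=
      Finset.sum_add_distrib
    have h4 : ∑ u ∈ univ.erase v, p u = 1 - p v := by
      rw [Finset.sum_erase_eq_sub (mem_univ v), hpsum]
    have h5 : ∑ u ∈ univ.erase v, p u * ∑ w, P u w * H w v
        = (∑ u, p u * ∑ w, P u w * H w v) - p v * ∑ w, P v w * H w v :=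
      Finset.sum_erase_eq_sub (mem_univ v)
    have h6 : ∑ u, p u * ∑ w, P u w * H w v = ∑ u, p u * H u v := by
      calc ∑ u, p u * ∑ w, P u w * H w v = ∑ u, ∑ w, p u * P u w * H w v := by
            simp [Finset.mul_sum, mul_assoc]
        _ = ∑ w, ∑ u, p u * P u w * H w v := Finset.sum_comm
        _ = ∑ w, (∑ u, p u * P u w) * H w v := by simp [Finset.sum_mul]
        _ = ∑ w, p w * H w v := by
            refine Finset.sum_congr rfl fun w _ => ?_; rw [hstat w]
    have := h1
    rw [h2, h3, h4, h5, h6] at this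
    have hexp : p v * (1 + ∑ w, P v w * H w v) = p v + p v * ∑ w, P v w * H w v := by ring
    rw [hexp]; linarith
  -- uniform recursion
  have star : ∀ u v, H u v = 1 - (if u = v then 1 / p v else 0) + ∑ w, P u w * H w v := by
    intro u v
    rcases eq_or_ne u v with h | h
    · subst h
      rw [hH0, if_pos rfl]
      have hp := (hppos u).ne'
      have h2 : ∑ w, P u w * H w u = 1 / p u - 1 := by
        field_simp
        nlinarith [kac u]
      rw [h2]; ring
    · rw [if_neg h, hH u v h]; ring
  -- harmonic-type identity for g_v(x) = H x v - ψ v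
  have harm : ∀ x v, (H x v - ψ v) - ∑ w, P x w * (H w v - ψ v)
      = 1 - (if x = v then 1 / p x else 0) := by
    intro x v
    have hs : ∑ w, P x w * (H w v - ψ v) = (∑ w, P x w * H w v) - ψ v := by
      rw [show (fun w => P x w * (H w v - ψ v)) = fun w => P x w * H w v - P x w * ψ v from
        funext fun w => by ring, Finset.sum_sub_distrib, ← Finset.sum_mul, hP1, one_mul]
    rw [hs]
    rcases eq_or_ne x v with h | h
    · subst h
      have := star x x
      rw [if_pos rfl] at this ⊢
      linarith
    · have := star x v
      rw [if_neg h] at this ⊢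
      linarith
  have gsum : ∀ v, ∑ x, p x * (H x v - ψ v) = 0 := by
    intro v
    rw [show (fun x => p x * (H x v - ψ v)) = fun x => p x * H x v - p x * ψ v from
      funext fun x => by ring, Finset.sum_sub_distrib, ← Finset.sum_mul, hpsum, one_mul, hψ]
    ring
  -- pairing: T u v := ∑_x p x * a_u x * (b_v x - P b_v x)
  have Tval : ∀ u v, ∑ x, p x * (H x u - ψ u) *
      ((H x v - ψ v) - ∑ w, P x w * (H w v - ψ v)) = -(H v u - ψ u) := by
    intro u v
    have h1 : ∑ x, p x * (H x u - ψ u) *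
        ((H x v - ψ v) - ∑ w, P x w * (H w v - ψ v))
        = ∑ x, (p x * (H x u - ψ u) - (if x = v then H x u - ψ u else 0)) := by
      refine Finset.sum_congr rfl fun x _ => ?_
      rw [harm x v]
      rcases eq_or_ne x v with h | h
      · subst h
        rw [if_pos rfl, if_pos rfl]
        have hp := (hppos x).ne'
        field_simp
      · rw [if_neg h, if_neg h]; ring
    rw [h1, Finset.sum_sub_distrib, gsum u, Finset.sum_ite_eq' univ v, if_pos (mem_univ v)]
    ring
  have Texp : ∀ u v, ∑ x, p x * (H x u - ψ u) *
      ((H x v - ψ v) - ∑ w, P x w * (H w v - ψ v))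
      = (∑ x, p x * (H x u - ψ u) * (H x v - ψ v))
        - ∑ x, ∑ w, p x * P x w * (H x u - ψ u) * (H w v - ψ v) := by
    intro u v
    rw [← Finset.sum_sub_distrib]
    refine Finset.sum_congr rfl fun x _ => ?_
    rw [mul_sub, Finset.mul_sum]
    congr 1
    exact Finset.sum_congr rfl fun w _ => by ring
  have sym : ∀ u v, ∑ x, ∑ w, p x * P x w * (H x u - ψ u) * (H w v - ψ v)
      = ∑ x, ∑ w, p x * P x w * (H x v - ψ v) * (H w u - ψ u) := by
    intro u v
    calc ∑ x, ∑ w, p x * P x w * (H x u - ψ u) * (H w v - ψ v)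
        = ∑ x, ∑ w, p w * P w x * (H w v - ψ v) * (H x u - ψ u) := by
          refine Finset.sum_congr rfl fun x _ => Finset.sum_congr rfl fun w _ => ?_
          rw [show p x * P x w * (H x u - ψ u) * (H w v - ψ v)
              = p x * P x w * (H w v - ψ v) * (H x u - ψ u) from by ring, hrev x w]
      _ = ∑ w, ∑ x, p w * P w x * (H w v - ψ v) * (H x u - ψ u) := Finset.sum_comm
  have key : ∀ u v, H u v - H v u = ψ v - ψ u := by
    intro u v
    have t1 := Tval u v
    have t2 := Tval v u
    rw [Texp u v] at t1
    rw [Texp v u] at t2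
    rw [sym v u] at t2
    have hsym1 : ∑ x, p x * (H x v - ψ v) * (H x u - ψ u)
        = ∑ x, p x * (H x u - ψ u) * (H x v - ψ v) :=
      Finset.sum_congr rfl fun x _ => by ring
    rw [hsym1] at t2
    linarith
  -- telescoping finish
  have tsum : ∑ i : Fin k, (H (vs i.castSucc) (vs i.succ) - H (vs i.succ) (vs i.castSucc))
      = ψ (vs (Fin.last k)) - ψ (vs 0) := by
    have h1 : ∑ i : Fin k, (H (vs i.castSucc) (vs i.succ) - H (vs i.succ) (vs i.castSucc))
        = ∑ i : Fin k, ((fun j => ψ (vs j)) i.succ - (fun j => ψ (vs j)) i.castSucc) :=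
      Finset.sum_congr rfl fun i _ => key _ _
    rw [h1, tele_aux k fun j => ψ (vs j)]
  have hedge := key (vs (Fin.last k)) (vs 0)
  have hsplit : ∑ i : Fin k, (H (vs i.castSucc) (vs i.succ) - H (vs i.succ) (vs i.castSucc))
      = (∑ i : Fin k, H (vs i.castSucc) (vs i.succ))
        - ∑ i : Fin k, H (vs i.succ) (vs i.castSucc) := Finset.sum_sub_distrib _ _
  rw [hsplit] at tsum
  linarith
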